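/- Jacobson density theorem: Let R be a ring, M a simple left R-module, and Δ = End_R(M). If v_1, ..., v_m ∈ M are Δ-linearly independent and w_1, ..., w_m ∈ M are arbitrary, then there exists r ∈ R with r·v_i = w_i for all i. -/

import Mathlib

universe u v

open LinearMap

theorem jacobson_aux_semisimple_pi {R : Type u} {M : Type v} [Ring R] [AddCommGroup M]
    [Module R M] (hM : IsSimpleModule R M) (m : ℕ) :
    IsSemisimpleModule R (Fin m → M) := by
  have : IsSemisimpleModule R M := inferInstance
  exact isSemisimpleModule_of_isSemisimpleModule_submodule'
    (p := fun i : Fin m => LinearMap.range (LinearMap.single R (fun _ : Fin m => M) i))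
    (fun i => IsSemisimpleModule.congr
      (LinearEquiv.ofInjective (LinearMap.single R (fun _ : Fin m => M) i)
        (Pi.single_injective (M := fun _ : Fin m => M) i)).symm)
    (LinearMap.iSup_range_single R _)

namespace SimpleModuleStatement

/-- Jacobson density theorem: let `M` be a simple left `R`-module and `Δ = End_R(M)`.  If
`v₁, …, vₘ ∈ M` are `Δ`-linearly independent and `w₁, …, wₘ ∈ M` are arbitrary, then there is
some `r ∈ R` with `r • vᵢ = wᵢ` for all `i`. -/
theorem jacobson_density {R : Type u} {M : Type v} [Ring R] [AddCommGroup M] [Module R M]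
    (hM : IsSimpleModule R M) {m : ℕ} (v : Fin m → M)
    (hv : LinearIndependent (Module.End R M) v) (w : Fin m → M) :
    ∃ r : R, ∀ i : Fin m, r • v i = w i := by
  have hss := jacobson_aux_semisimple_pi hM m
  -- the cyclic submodule generated by v
  let f : R →ₗ[R] (Fin m → M) :=
    { toFun := fun r => fun i => r • v i
      map_add' := by intro a b; funext i; simp [add_smul]
      map_smul' := by intro a b; funext i; simp [mul_smul] }
  let N : Submodule R (Fin m → M) := LinearMap.range f
  obtain ⟨P, hP⟩ := exists_isCompl N
  -- projection onto N along P
  let π : (Fin m → M) →ₗ[R] (Fin m → M) :=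
    N.subtype ∘ₗ Submodule.linearProjOfIsCompl N P hP
  -- ρ kills N and vanishes iff N = ⊤
  let ρ : (Fin m → M) →ₗ[R] (Fin m → M) := LinearMap.id - π
  have hρN : ∀ x ∈ N, ρ x = 0 := by
    intro x hx
    simp [ρ, π, Submodule.linearProjOfIsCompl, Submodule.projectionOnto_apply_of_mem_left hP hx]
  -- matrix entries of ρ
  let δ : Fin m → Fin m → Module.End R M :=
    fun i j => LinearMap.proj i ∘ₗ ρ ∘ₗ LinearMap.single R (fun _ : Fin m => M) j
  have hρ_apply : ∀ x : Fin m → M, ∀ i, ρ x i = ∑ j, δ i j (x j) := by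
    intro x i
    have hx : x = ∑ j, LinearMap.single R (fun _ : Fin m => M) j (x j) := by
      funext k
      simp [LinearMap.single_apply, Finset.sum_apply, Pi.single_apply]
    conv_lhs => rw [hx]
    rw [map_sum]
    simp [δ]
  -- v itself lies in N (take r = 1), so ρ v = 0
  have hvN : (fun i => v i) ∈ N := ⟨1, by funext i; simp [f]⟩
  have hρv : ρ (fun i => v i) = 0 := hρN _ hvN
  -- so all matrix entries vanish by linear independence
  have hδ : ∀ i j, δ i j = 0 := by
    intro i
    have h0 : ∑ j, δ i j • v j = 0 := by
      have := congrFun hρv i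
      rw [hρ_apply] at this
      simpa using this
    exact Fintype.linearIndependent_iff.mp hv (fun j => δ i j) h0
  -- hence ρ = 0, i.e. N = ⊤
  have hρ0 : ∀ x : Fin m → M, ρ x = 0 := by
    intro x; funext i
    rw [hρ_apply]
    simp [hδ]
  have hw : w ∈ N := by
    have := hρ0 w
    have h2 : w - π w = 0 := by simpa [ρ, sub_eq_zero] using this
    have : w = π w := by rwa [sub_eq_zero] at h2
    rw [this]
    exact (Submodule.linearProjOfIsCompl N P hP w).2
  obtain ⟨r, hr⟩ := hw
  exact ⟨r, fun i => congrFun hr i⟩
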